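/- Under the good events and with LCBs Q̲_h^{k,h0} ≤ Q_h^{k,h0} ≤ Q_h^{*,h0} ≤ Q̃_h^{k,h0} (valid confidence bounds for candidate policies), any executed policy π^k of StepMix—whether the baseline π^b, the optimistic policy, or a one-step mixture π^k = (1−ρ)π^{k,h^k} + ρπ^{k,h^k−1} with ρ = (V̲_1^{k,h^k} − γ)/(V̲_1^{k,h^k} − V̲_1^{k,h^k−1})—satisfies V_1^{π^k} ≥ γ, provided the baseline satisfies V_1^{π^b} ≥ γ. -/

import Mathlib

/-- safety of every executed policy of StepMix. Given valid LCBs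
`L h0 ≤ Vtrue h0` for the candidate policies `π^{k,h0}` (`h0 = 0, …, H`, where the
candidate `H` is the safe baseline, so `γ ≤ Vtrue H`), the executed policy — the baseline
(when no LCB clears `γ`), the optimistic policy (when `h^k = 0`), or the one-step mixture
with `ρ = (L h^k − γ)/(L h^k − L (h^k − 1))`, whose value is the corresponding convex
combination of true values — satisfies `V_1^{π^k} ≥ γ`. -/
theorem stmt19 (H : ℕ) (γ : ℝ) (Vtrue L : ℕ → ℝ)
    (hLCB : ∀ h0 ≤ H, L h0 ≤ Vtrue h0)
    (hbase : γ ≤ Vtrue H)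
    (Vexec : ℝ)
    (hcase1 : (∀ h0 ≤ H, L h0 < γ) → Vexec = Vtrue H)
    (hcase2 : ∀ hk ≤ H, γ ≤ L hk → (∀ h0 < hk, L h0 < γ) →
        (hk = 0 → Vexec = Vtrue 0) ∧
        (hk ≠ 0 →
          Vexec = ((L hk - γ) / (L hk - L (hk - 1))) * Vtrue (hk - 1)
            + (1 - (L hk - γ) / (L hk - L (hk - 1))) * Vtrue hk)) :
    γ ≤ Vexec := by
  by_cases hall : ∀ h0 ≤ H, L h0 < γ
  · rw [hcase1 hall]; exact hbase
  · push_neg at hall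
    classical
    have hex : ∃ n, n ≤ H ∧ γ ≤ L n := by
      obtain ⟨n, hn, hγ⟩ := hall
      exact ⟨n, hn, hγ⟩
    set hk := Nat.find hex with hhk
    obtain ⟨hkH, hkγ⟩ := Nat.find_spec hex
    have hmin : ∀ h0 < hk, L h0 < γ := by
      intro h0 hh0
      have := Nat.find_min hex hh0
      push_neg at this
      by_contra hc
      push_neg at hc
      exact absurd (this (le_trans (le_of_lt hh0) hkH)) (not_lt.mpr hc)
    obtain ⟨hc0, hcn⟩ := hcase2 hk hkH hkγ hmin
    rcases Nat.eq_zero_or_pos hk with h0 | hpos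
    · rw [hc0 h0]
      exact le_trans hkγ (h0 ▸ hLCB hk hkH)
    · have hne : hk ≠ 0 := Nat.pos_iff_ne_zero.mp hpos
      rw [hcn hne]
      have hlt : L (hk - 1) < γ := hmin _ (Nat.sub_lt hpos one_pos)
      have hden : 0 < L hk - L (hk - 1) := by linarith
      set ρ := (L hk - γ) / (L hk - L (hk - 1)) with hρ
      have hρ0 : 0 ≤ ρ := div_nonneg (by linarith) (le_of_lt hden)
      have hρ1 : ρ ≤ 1 := by
        rw [hρ, div_le_one hden]; linarith
      have hkey : ρ * L (hk - 1) + (1 - ρ) * L hk = γ := by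
        field_simp [hρ]
        have hm : ρ * (L hk - L (hk - 1)) = L hk - γ := by
          rw [hρ]; exact div_mul_cancel₀ _ hden.ne'
        linarith
      have h1 : L (hk - 1) ≤ Vtrue (hk - 1) := hLCB _ (le_trans (Nat.sub_le _ _) hkH)
      have h2 : L hk ≤ Vtrue hk := hLCB _ hkH
      nlinarith [mul_le_mul_of_nonneg_left h1 hρ0,
        mul_le_mul_of_nonneg_left h2 (by linarith : (0:ℝ) ≤ 1 - ρ)]
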